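/- Let ε = (ε¹₁,ε¹₂,ε²₁,ε²₂) ∈ [0,1/2]⁴. Then the following are equivalent: (a) for every p ∈ [0,1/2]⁴, (p, ε) ∈ ELFP; (b) max Sε ≤ 1/2. (This characterizes the set Fit for the no-constraint ('chaos') condition.) -/

import Mathlib

open Finset

/-- The signed sum `±(x₁₁−¼) ± (x₁₂−¼) ± (x₂₁−¼) ± (x₂₂−¼)` over the four components of `x`,
with a `+` sign exactly where the sign choice `s` is `true`. -/
noncomputable def Sval (x : Fin 2 → Fin 2 → ℝ) (s : Fin 2 → Fin 2 → Bool) : ℝ :=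
  ∑ i : Fin 2, ∑ j : Fin 2, (if s i j then (1 : ℝ) else -1) * (x i j - 1 / 4)

/-- The number of `+` signs in a sign choice. -/
def plusCount (s : Fin 2 → Fin 2 → Bool) : ℕ :=
  (Finset.univ.filter fun ij : Fin 2 × Fin 2 => s ij.1 ij.2 = true).card

/-- `max Sx`: the maximum of the signed sums over all 16 sign choices. -/
noncomputable def maxS (x : Fin 2 → Fin 2 → ℝ) : ℝ :=
  Finset.univ.sup' Finset.univ_nonempty (Sval x)

/-- `max S₀x`: the maximum over sign choices with an even number of `+` signs. -/
noncomputable def maxS0 (x : Fin 2 → Fin 2 → ℝ) : ℝ :=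
  (Finset.univ.filter fun s : Fin 2 → Fin 2 → Bool => Even (plusCount s)).sup'
    ⟨fun _ _ => false, by decide⟩ (Sval x)

/-- `max S₁x`: the maximum over sign choices with an odd number of `+` signs. -/
noncomputable def maxS1 (x : Fin 2 → Fin 2 → ℝ) : ℝ :=
  (Finset.univ.filter fun s : Fin 2 → Fin 2 → Bool => ¬ Even (plusCount s)).sup'
    ⟨fun i j => i == 0 && j == 0, by decide⟩ (Sval x)

/-- `r ∈ S₀x`: `r` is one of the signed sums with an even number of `+` signs. -/
def memS0 (x : Fin 2 → Fin 2 → ℝ) (r : ℝ) : Prop :=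
  ∃ s : Fin 2 → Fin 2 → Bool, Even (plusCount s) ∧ Sval x s = r

/-- The Extended Linear Feasibility Polytope: `(p, ε) ∈ ELFP` iff there is a joint
distribution on `({−1,+1})⁸` — encoded as `Fin 2 → Fin 2 → Fin 2 → Bool`, `h k i j` being the
value of `Hᵏᵢⱼ` (`true` standing for `+1`) — with uniform ±1 one-dimensional marginals,
`Pr[H¹ᵢⱼ = +1, H²ᵢⱼ = +1] = p i j`, `Pr[H¹ᵢ₁ = +1, H¹ᵢ₂ = +1] = ε 0 i`, and
`Pr[H²₁ⱼ = +1, H²₂ⱼ = +1] = ε 1 j`. -/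
def ELFP (p ε : Fin 2 → Fin 2 → ℝ) : Prop :=
  ∃ μ : (Fin 2 → Fin 2 → Fin 2 → Bool) → ℝ,
    (∀ h, 0 ≤ μ h) ∧
    (∑ h : Fin 2 → Fin 2 → Fin 2 → Bool, μ h = 1) ∧
    (∀ k i j : Fin 2,
      ∑ h ∈ Finset.univ.filter
          (fun h : Fin 2 → Fin 2 → Fin 2 → Bool => h k i j = true), μ h = 1 / 2) ∧
    (∀ i j : Fin 2,
      ∑ h ∈ Finset.univ.filter
          (fun h : Fin 2 → Fin 2 → Fin 2 → Bool => h 0 i j = true ∧ h 1 i j = true), μ h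
        = p i j) ∧
    (∀ i : Fin 2,
      ∑ h ∈ Finset.univ.filter
          (fun h : Fin 2 → Fin 2 → Fin 2 → Bool => h 0 i 0 = true ∧ h 0 i 1 = true), μ h
        = ε 0 i) ∧
    (∀ j : Fin 2,
      ∑ h ∈ Finset.univ.filter
          (fun h : Fin 2 → Fin 2 → Fin 2 → Bool => h 1 0 j = true ∧ h 1 1 j = true), μ h
        = ε 1 j)

def Ebit (b : Bool) : ℝ := if b then 1 else -1
def Ibit (b : Bool) : ℝ := if b then 1 else 0

lemma Ebit_mul (a b : Bool) :
    Ebit a * Ebit b = 4 * (Ibit a * Ibit b) - 2 * Ibit a - 2 * Ibit b + 1 := by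
  cases a <;> cases b <;> norm_num [Ebit, Ibit]

lemma Ebit_sq (b : Bool) : Ebit b * Ebit b = 1 := by cases b <;> norm_num [Ebit]

lemma Ebit_parity (a b c d : Bool) :
    Ebit a * Ebit b * Ebit c * Ebit d * Ebit (a.xor (b.xor (c.xor d))) = -1 := by
  cases a <;> cases b <;> cases c <;> cases d <;> norm_num [Ebit]

lemma corr_eq {μ : (Fin 2 → Fin 2 → Fin 2 → Bool) → ℝ}
    {a b : (Fin 2 → Fin 2 → Fin 2 → Bool) → Bool} {q : ℝ}
    (htot : ∑ h : Fin 2 → Fin 2 → Fin 2 → Bool, μ h = 1)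
    (ha : ∑ h ∈ Finset.univ.filter (fun h : Fin 2 → Fin 2 → Fin 2 → Bool => a h = true), μ h = 1/2)
    (hb : ∑ h ∈ Finset.univ.filter (fun h : Fin 2 → Fin 2 → Fin 2 → Bool => b h = true), μ h = 1/2)
    (hab : ∑ h ∈ Finset.univ.filter
        (fun h : Fin 2 → Fin 2 → Fin 2 → Bool => a h = true ∧ b h = true), μ h = q) :
    ∑ h : Fin 2 → Fin 2 → Fin 2 → Bool, μ h * (Ebit (a h) * Ebit (b h)) = 4 * q - 1 := by
  have ea : ∑ h : Fin 2 → Fin 2 → Fin 2 → Bool, μ h * Ibit (a h) = 1/2 := by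
    rw [← ha, Finset.sum_filter]
    refine Finset.sum_congr rfl fun h _ => ?_
    cases hah : a h <;> simp [Ibit, hah]
  have eb : ∑ h : Fin 2 → Fin 2 → Fin 2 → Bool, μ h * Ibit (b h) = 1/2 := by
    rw [← hb, Finset.sum_filter]
    refine Finset.sum_congr rfl fun h _ => ?_
    cases hbh : b h <;> simp [Ibit, hbh]
  have eab : ∑ h : Fin 2 → Fin 2 → Fin 2 → Bool, μ h * (Ibit (a h) * Ibit (b h)) = q := by
    rw [← hab, Finset.sum_filter]
    refine Finset.sum_congr rfl fun h _ => ?_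
    cases hah : a h <;> cases hbh : b h <;> simp [Ibit, hah, hbh]
  have expand : ∀ h : Fin 2 → Fin 2 → Fin 2 → Bool,
      μ h * (Ebit (a h) * Ebit (b h)) =
        4 * (μ h * (Ibit (a h) * Ibit (b h))) - 2 * (μ h * Ibit (a h))
          - 2 * (μ h * Ibit (b h)) + μ h := by
    intro h; rw [Ebit_mul]; ring
  rw [Finset.sum_congr rfl fun h _ => expand h]
  simp only [Finset.sum_add_distrib, Finset.sum_sub_distrib, ← Finset.mul_sum]
  rw [ea, eb, eab, htot]; ring

lemma eight_sum_le (c1 c2 c3 c4 c5 c6 c7 c8 : ℝ)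
    (h1 : c1 = 1 ∨ c1 = -1) (h2 : c2 = 1 ∨ c2 = -1) (h3 : c3 = 1 ∨ c3 = -1)
    (h4 : c4 = 1 ∨ c4 = -1) (h5 : c5 = 1 ∨ c5 = -1) (h6 : c6 = 1 ∨ c6 = -1)
    (h7 : c7 = 1 ∨ c7 = -1) (h8 : c8 = 1 ∨ c8 = -1)
    (hp : c1 * c2 * c3 * c4 * c5 * c6 * c7 * c8 = -1) :
    c1 + c2 + c3 + c4 + c5 + c6 + c7 + c8 ≤ 6 := by
  rcases h1 with rfl | rfl <;> rcases h2 with rfl | rfl <;> rcases h3 with rfl | rfl <;>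
    rcases h4 with rfl | rfl <;> rcases h5 with rfl | rfl <;> rcases h6 with rfl | rfl <;>
    rcases h7 with rfl | rfl <;> rcases h8 with rfl | rfl <;>
    (revert hp; norm_num)

lemma pm3 (a b c : Bool) : Ebit a * (Ebit b * Ebit c) = 1 ∨ Ebit a * (Ebit b * Ebit c) = -1 := by
  cases a <;> cases b <;> cases c <;> norm_num [Ebit]

lemma pm2 (b c : Bool) : Ebit b * Ebit c = 1 ∨ Ebit b * Ebit c = -1 := by
  cases b <;> cases c <;> norm_num [Ebit]

lemma forward_dir (ε : Fin 2 → Fin 2 → ℝ)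
    (hall : ∀ p : Fin 2 → Fin 2 → ℝ, (∀ i j, p i j ∈ Set.Icc (0 : ℝ) (1 / 2)) → ELFP p ε) :
    maxS ε ≤ 1 / 2 := by
  rw [maxS, Finset.sup'_le_iff]
  intro s _
  classical
  set t : Bool := (s 0 0).xor ((s 0 1).xor ((s 1 0).xor (s 1 1))) with ht
  set p : Fin 2 → Fin 2 → ℝ := fun i j => if i = 0 ∧ j = 0 then (cond t (1/2) 0) else 1/2 with hpdef
  have hp : ∀ i j, p i j ∈ Set.Icc (0:ℝ) (1/2) := by
    intro i j
    by_cases hij : i = 0 ∧ j = 0 <;> simp [hpdef, hij] <;> cases t <;> norm_num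
  obtain ⟨μ, hnn, htot, hmarg, hpcon, he1, he2⟩ := hall p hp
  have c1 := corr_eq (a := fun h => h 0 0 0) (b := fun h => h 0 0 1) htot (hmarg 0 0 0) (hmarg 0 0 1) (he1 0)
  have c2 := corr_eq (a := fun h => h 0 1 0) (b := fun h => h 0 1 1) htot (hmarg 0 1 0) (hmarg 0 1 1) (he1 1)
  have c3 := corr_eq (a := fun h => h 1 0 0) (b := fun h => h 1 1 0) htot (hmarg 1 0 0) (hmarg 1 1 0) (he2 0)
  have c4 := corr_eq (a := fun h => h 1 0 1) (b := fun h => h 1 1 1) htot (hmarg 1 0 1) (hmarg 1 1 1) (he2 1)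
  have c5 := corr_eq (a := fun h => h 0 0 0) (b := fun h => h 1 0 0) htot (hmarg 0 0 0) (hmarg 1 0 0) (hpcon 0 0)
  have c6 := corr_eq (a := fun h => h 0 0 1) (b := fun h => h 1 0 1) htot (hmarg 0 0 1) (hmarg 1 0 1) (hpcon 0 1)
  have c7 := corr_eq (a := fun h => h 0 1 0) (b := fun h => h 1 1 0) htot (hmarg 0 1 0) (hmarg 1 1 0) (hpcon 1 0)
  have c8 := corr_eq (a := fun h => h 0 1 1) (b := fun h => h 1 1 1) htot (hmarg 0 1 1) (hmarg 1 1 1) (hpcon 1 1)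
  -- the pointwise bound
  have key : ∀ h : Fin 2 → Fin 2 → Fin 2 → Bool,
      (Ebit (s 0 0) * (Ebit (h 0 0 0) * Ebit (h 0 0 1))
        + Ebit (s 0 1) * (Ebit (h 0 1 0) * Ebit (h 0 1 1))
        + Ebit (s 1 0) * (Ebit (h 1 0 0) * Ebit (h 1 1 0))
        + Ebit (s 1 1) * (Ebit (h 1 0 1) * Ebit (h 1 1 1))
        + Ebit t * (Ebit (h 0 0 0) * Ebit (h 1 0 0))
        + Ebit (h 0 0 1) * Ebit (h 1 0 1)
        + Ebit (h 0 1 0) * Ebit (h 1 1 0)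
        + Ebit (h 0 1 1) * Ebit (h 1 1 1)) ≤ 6 := by
    intro h
    refine eight_sum_le _ _ _ _ _ _ _ _ (pm3 _ _ _) (pm3 _ _ _) (pm3 _ _ _) (pm3 _ _ _)
      (pm3 _ _ _) (pm2 _ _) (pm2 _ _) (pm2 _ _) ?_
    have hs := Ebit_parity (s 0 0) (s 0 1) (s 1 0) (s 1 1)
    calc (Ebit (s 0 0) * (Ebit (h 0 0 0) * Ebit (h 0 0 1)))
          * (Ebit (s 0 1) * (Ebit (h 0 1 0) * Ebit (h 0 1 1)))
          * (Ebit (s 1 0) * (Ebit (h 1 0 0) * Ebit (h 1 1 0)))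
          * (Ebit (s 1 1) * (Ebit (h 1 0 1) * Ebit (h 1 1 1)))
          * (Ebit t * (Ebit (h 0 0 0) * Ebit (h 1 0 0)))
          * (Ebit (h 0 0 1) * Ebit (h 1 0 1))
          * (Ebit (h 0 1 0) * Ebit (h 1 1 0))
          * (Ebit (h 0 1 1) * Ebit (h 1 1 1))
        = (Ebit (s 0 0) * Ebit (s 0 1) * Ebit (s 1 0) * Ebit (s 1 1) * Ebit t)
          * ((Ebit (h 0 0 0) * Ebit (h 0 0 0)) * (Ebit (h 0 0 1) * Ebit (h 0 0 1))
            * (Ebit (h 0 1 0) * Ebit (h 0 1 0)) * (Ebit (h 0 1 1) * Ebit (h 0 1 1))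
            * (Ebit (h 1 0 0) * Ebit (h 1 0 0)) * (Ebit (h 1 0 1) * Ebit (h 1 0 1))
            * (Ebit (h 1 1 0) * Ebit (h 1 1 0)) * (Ebit (h 1 1 1) * Ebit (h 1 1 1))) := by
          ring
      _ = -1 := by rw [ht, hs, Ebit_sq, Ebit_sq, Ebit_sq, Ebit_sq, Ebit_sq, Ebit_sq, Ebit_sq, Ebit_sq]; ring
  -- sum identity
  have ident : ∑ h : Fin 2 → Fin 2 → Fin 2 → Bool, μ h *
      (Ebit (s 0 0) * (Ebit (h 0 0 0) * Ebit (h 0 0 1))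
        + Ebit (s 0 1) * (Ebit (h 0 1 0) * Ebit (h 0 1 1))
        + Ebit (s 1 0) * (Ebit (h 1 0 0) * Ebit (h 1 1 0))
        + Ebit (s 1 1) * (Ebit (h 1 0 1) * Ebit (h 1 1 1))
        + Ebit t * (Ebit (h 0 0 0) * Ebit (h 1 0 0))
        + Ebit (h 0 0 1) * Ebit (h 1 0 1)
        + Ebit (h 0 1 0) * Ebit (h 1 1 0)
        + Ebit (h 0 1 1) * Ebit (h 1 1 1))
      = Ebit (s 0 0) * (4 * ε 0 0 - 1) + Ebit (s 0 1) * (4 * ε 0 1 - 1)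
        + Ebit (s 1 0) * (4 * ε 1 0 - 1) + Ebit (s 1 1) * (4 * ε 1 1 - 1)
        + Ebit t * (4 * p 0 0 - 1) + (4 * p 0 1 - 1) + (4 * p 1 0 - 1) + (4 * p 1 1 - 1) := by
    have expand : ∀ h : Fin 2 → Fin 2 → Fin 2 → Bool, μ h *
        (Ebit (s 0 0) * (Ebit (h 0 0 0) * Ebit (h 0 0 1))
          + Ebit (s 0 1) * (Ebit (h 0 1 0) * Ebit (h 0 1 1))
          + Ebit (s 1 0) * (Ebit (h 1 0 0) * Ebit (h 1 1 0))
          + Ebit (s 1 1) * (Ebit (h 1 0 1) * Ebit (h 1 1 1))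
          + Ebit t * (Ebit (h 0 0 0) * Ebit (h 1 0 0))
          + Ebit (h 0 0 1) * Ebit (h 1 0 1)
          + Ebit (h 0 1 0) * Ebit (h 1 1 0)
          + Ebit (h 0 1 1) * Ebit (h 1 1 1))
        = Ebit (s 0 0) * (μ h * (Ebit (h 0 0 0) * Ebit (h 0 0 1)))
          + Ebit (s 0 1) * (μ h * (Ebit (h 0 1 0) * Ebit (h 0 1 1)))
          + Ebit (s 1 0) * (μ h * (Ebit (h 1 0 0) * Ebit (h 1 1 0)))
          + Ebit (s 1 1) * (μ h * (Ebit (h 1 0 1) * Ebit (h 1 1 1)))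
          + Ebit t * (μ h * (Ebit (h 0 0 0) * Ebit (h 1 0 0)))
          + μ h * (Ebit (h 0 0 1) * Ebit (h 1 0 1))
          + μ h * (Ebit (h 0 1 0) * Ebit (h 1 1 0))
          + μ h * (Ebit (h 0 1 1) * Ebit (h 1 1 1)) := by
      intro h; ring
    rw [Finset.sum_congr rfl fun h _ => expand h]
    simp only [Finset.sum_add_distrib, ← Finset.mul_sum]
    rw [c1, c2, c3, c4, c5, c6, c7, c8]
  have upper : ∑ h : Fin 2 → Fin 2 → Fin 2 → Bool, μ h *
      (Ebit (s 0 0) * (Ebit (h 0 0 0) * Ebit (h 0 0 1))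
        + Ebit (s 0 1) * (Ebit (h 0 1 0) * Ebit (h 0 1 1))
        + Ebit (s 1 0) * (Ebit (h 1 0 0) * Ebit (h 1 1 0))
        + Ebit (s 1 1) * (Ebit (h 1 0 1) * Ebit (h 1 1 1))
        + Ebit t * (Ebit (h 0 0 0) * Ebit (h 1 0 0))
        + Ebit (h 0 0 1) * Ebit (h 1 0 1)
        + Ebit (h 0 1 0) * Ebit (h 1 1 0)
        + Ebit (h 0 1 1) * Ebit (h 1 1 1)) ≤ 6 := by
    calc ∑ h : Fin 2 → Fin 2 → Fin 2 → Bool, μ h * _ ≤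
        ∑ h : Fin 2 → Fin 2 → Fin 2 → Bool, μ h * 6 :=
          Finset.sum_le_sum fun h _ => mul_le_mul_of_nonneg_left (key h) (hnn h)
      _ = 6 := by rw [← Finset.sum_mul, htot]; ring
  rw [ident] at upper
  -- evaluate the p terms
  have hp00 : p 0 0 = cond t (1/2) 0 := by simp [hpdef]
  have hp01 : p 0 1 = 1/2 := by norm_num [hpdef]
  have hp10 : p 1 0 = 1/2 := by norm_num [hpdef]
  have hp11 : p 1 1 = 1/2 := by norm_num [hpdef]
  have hpt : Ebit t * (4 * p 0 0 - 1) = 1 := by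
    rw [hp00]; cases t <;> norm_num [Ebit]
  rw [hp01, hp10, hp11, hpt] at upper
  have hsv : Sval ε s = (if s 0 0 then (1:ℝ) else -1) * (ε 0 0 - 1/4)
      + (if s 0 1 then (1:ℝ) else -1) * (ε 0 1 - 1/4)
      + (if s 1 0 then (1:ℝ) else -1) * (ε 1 0 - 1/4)
      + (if s 1 1 then (1:ℝ) else -1) * (ε 1 1 - 1/4) := by
    simp [Sval, Fin.sum_univ_two]; ring
  have hrel : Ebit (s 0 0) * (4 * ε 0 0 - 1) + Ebit (s 0 1) * (4 * ε 0 1 - 1)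
      + Ebit (s 1 0) * (4 * ε 1 0 - 1) + Ebit (s 1 1) * (4 * ε 1 1 - 1) = 4 * Sval ε s := by
    rw [hsv]; simp only [Ebit]; ring
  rw [hrel] at upper
  linarith

noncomputable def Wr (d1 d2 d3 d4 : ℝ) : ℝ :=
  d1 - max 0 ((d1+d2+d3+d4-2)/2) - max 0 ((d1+d2-d3-d4)/2)
    - max 0 ((d1+d3-d2-d4)/2) - max 0 ((d1+d4-d2-d3)/2)

noncomputable def Wc (d1 d2 d3 d4 : ℝ) (a b c : Bool) : ℝ :=
  match a, b, c with
  | false, false, false => 1 - (d1+d2+d3+d4)/2 + max 0 ((d1+d2+d3+d4-2)/2)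
  | true,  true,  true  => max 0 ((d1+d2+d3+d4-2)/2)
  | true,  true,  false => max 0 ((d1+d2-d3-d4)/2)
  | true,  false, true  => max 0 ((d1+d3-d2-d4)/2)
  | false, true,  false => max 0 ((d2+d4-d1-d3)/2)
  | false, false, true  => max 0 ((d3+d4-d1-d2)/2)
  | true,  false, false => max 0 ((d1+d4-d2-d3)/2) + Wr d1 d2 d3 d4
  | false, true,  true  => max 0 ((d2+d3-d1-d4)/2) + Wr d1 d2 d3 d4

def Dok (d1 d2 d3 d4 : ℝ) : Prop :=
  0 ≤ d1 ∧ d1 ≤ 1 ∧ 0 ≤ d2 ∧ d2 ≤ 1 ∧ 0 ≤ d3 ∧ d3 ≤ 1 ∧ 0 ≤ d4 ∧ d4 ≤ 1 ∧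
  d1 ≤ d2+d3+d4 ∧ d2 ≤ d1+d3+d4 ∧ d3 ≤ d1+d2+d4 ∧ d4 ≤ d1+d2+d3 ∧
  d2+d3+d4-d1 ≤ 2 ∧ d1+d3+d4-d2 ≤ 2 ∧ d1+d2+d4-d3 ≤ 2 ∧ d1+d2+d3-d4 ≤ 2

lemma Wr_nonneg {d1 d2 d3 d4 : ℝ} (hd : Dok d1 d2 d3 d4) : 0 ≤ Wr d1 d2 d3 d4 := by
  obtain ⟨a1,a2,a3,a4,a5,a6,a7,a8,b1,b2,b3,b4,c1,c2,c3,c4⟩ := hd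
  rw [Wr]
  rcases max_cases 0 ((d1+d2+d3+d4-2)/2) with ⟨e0,l0⟩|⟨e0,l0⟩ <;>
  rcases max_cases 0 ((d1+d2-d3-d4)/2) with ⟨e1,l1⟩|⟨e1,l1⟩ <;>
  rcases max_cases 0 ((d1+d3-d2-d4)/2) with ⟨e2,l2⟩|⟨e2,l2⟩ <;>
  rcases max_cases 0 ((d1+d4-d2-d3)/2) with ⟨e3,l3⟩|⟨e3,l3⟩ <;>
  rw [e0,e1,e2,e3] <;> linarith

lemma Wc_nonneg {d1 d2 d3 d4 : ℝ} (hd : Dok d1 d2 d3 d4) (a b c : Bool) :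
    0 ≤ Wc d1 d2 d3 d4 a b c := by
  have hr := Wr_nonneg hd
  obtain ⟨a1,a2,a3,a4,a5,a6,a7,a8,b1,b2,b3,b4,c1,c2,c3,c4⟩ := hd
  cases a <;> cases b <;> cases c <;> simp only [Wc] <;>
    first
      | exact le_max_left 0 _
      | exact add_nonneg (le_max_left 0 _) hr
      | linarith [le_max_right (0:ℝ) ((d1+d2+d3+d4-2)/2)]

lemma max0_pair {x y : ℝ} (h : x + y = 0) : max 0 x - max 0 y = x := by
  rcases le_total x 0 with hx | hx
  · rw [max_eq_left hx, max_eq_right (by linarith : (0:ℝ) ≤ y)]; linarith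
  · rw [max_eq_right hx, max_eq_left (by linarith : y ≤ (0:ℝ))]; linarith

def g4 (a b c d : Bool) : Fin 2 → Fin 2 → Bool := ![![a,b],![c,d]]

@[simp] lemma g4_00 (a b c d : Bool) : g4 a b c d 0 0 = a := rfl
@[simp] lemma g4_01 (a b c d : Bool) : g4 a b c d 0 1 = b := rfl
@[simp] lemma g4_10 (a b c d : Bool) : g4 a b c d 1 0 = c := rfl
@[simp] lemma g4_11 (a b c d : Bool) : g4 a b c d 1 1 = d := rfl

def e4 : (Bool × Bool × Bool × Bool) ≃ (Fin 2 → Fin 2 → Bool) where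
  toFun t := g4 t.1 t.2.1 t.2.2.1 t.2.2.2
  invFun x := (x 0 0, x 0 1, x 1 0, x 1 1)
  left_inv := by rintro ⟨a,b,c,d⟩; rfl
  right_inv := by intro x; funext i j; fin_cases i <;> fin_cases j <;> rfl

lemma sum_g4 (f : (Fin 2 → Fin 2 → Bool) → ℝ) :
    ∑ x, f x = ∑ a : Bool, ∑ b : Bool, ∑ c : Bool, ∑ d : Bool, f (g4 a b c d) := by
  rw [← Equiv.sum_comp e4 f]
  simp only [Fintype.sum_prod_type]
  rfl

noncomputable def nu (d1 d2 d3 d4 : ℝ) (x : Fin 2 → Fin 2 → Bool) : ℝ :=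
  (1/2) * Wc d1 d2 d3 d4 (x 0 0 != x 0 1) (x 0 1 != x 1 1) (x 1 1 != x 1 0)

lemma nu_nonneg {d1 d2 d3 d4 : ℝ} (hd : Dok d1 d2 d3 d4) (x : Fin 2 → Fin 2 → Bool) :
    0 ≤ nu d1 d2 d3 d4 x := by
  have := Wc_nonneg hd (x 0 0 != x 0 1) (x 0 1 != x 1 1) (x 1 1 != x 1 0)
  rw [nu]; linarith

lemma nu_total (d1 d2 d3 d4 : ℝ) : ∑ x : Fin 2 → Fin 2 → Bool, nu d1 d2 d3 d4 x = 1 := by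
  have h12 := max0_pair (x := (d1+d2-d3-d4)/2) (y := (d3+d4-d1-d2)/2) (by ring)
  have h13 := max0_pair (x := (d1+d3-d2-d4)/2) (y := (d2+d4-d1-d3)/2) (by ring)
  have h14 := max0_pair (x := (d1+d4-d2-d3)/2) (y := (d2+d3-d1-d4)/2) (by ring)
  rw [sum_g4]
  simp only [Fintype.sum_bool, g4_00, g4_01, g4_10, g4_11, nu, bne, Bool.false_eq_true,
    Bool.true_eq_false, eq_self_iff_true, and_true, true_and, and_false, false_and, and_self,
    if_true, if_false, ite_true, ite_false]
  norm_num [Wc, Wr]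
  linarith

lemma nu_half00 (d1 d2 d3 d4 : ℝ) (v : Bool) :
    ∑ x : Fin 2 → Fin 2 → Bool, (if x 0 0 = v then nu d1 d2 d3 d4 x else 0) = 1/2 := by
  have h12 := max0_pair (x := (d1+d2-d3-d4)/2) (y := (d3+d4-d1-d2)/2) (by ring)
  have h13 := max0_pair (x := (d1+d3-d2-d4)/2) (y := (d2+d4-d1-d3)/2) (by ring)
  have h14 := max0_pair (x := (d1+d4-d2-d3)/2) (y := (d2+d3-d1-d4)/2) (by ring)
  cases v <;>
    (rw [sum_g4]
     simp only [Fintype.sum_bool, g4_00, g4_01, g4_10, g4_11, nu, bne, Bool.false_eq_true,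
       Bool.true_eq_false, eq_self_iff_true, and_true, true_and, and_false, false_and, and_self,
       if_true, if_false, ite_true, ite_false]
     norm_num [Wc, Wr]
     linarith)

lemma nu_half01 (d1 d2 d3 d4 : ℝ) (v : Bool) :
    ∑ x : Fin 2 → Fin 2 → Bool, (if x 0 1 = v then nu d1 d2 d3 d4 x else 0) = 1/2 := by
  have h12 := max0_pair (x := (d1+d2-d3-d4)/2) (y := (d3+d4-d1-d2)/2) (by ring)
  have h13 := max0_pair (x := (d1+d3-d2-d4)/2) (y := (d2+d4-d1-d3)/2) (by ring)
  have h14 := max0_pair (x := (d1+d4-d2-d3)/2) (y := (d2+d3-d1-d4)/2) (by ring)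
  cases v <;>
    (rw [sum_g4]
     simp only [Fintype.sum_bool, g4_00, g4_01, g4_10, g4_11, nu, bne, Bool.false_eq_true,
       Bool.true_eq_false, eq_self_iff_true, and_true, true_and, and_false, false_and, and_self,
       if_true, if_false, ite_true, ite_false]
     norm_num [Wc, Wr]
     linarith)

lemma nu_half10 (d1 d2 d3 d4 : ℝ) (v : Bool) :
    ∑ x : Fin 2 → Fin 2 → Bool, (if x 1 0 = v then nu d1 d2 d3 d4 x else 0) = 1/2 := by
  have h12 := max0_pair (x := (d1+d2-d3-d4)/2) (y := (d3+d4-d1-d2)/2) (by ring)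
  have h13 := max0_pair (x := (d1+d3-d2-d4)/2) (y := (d2+d4-d1-d3)/2) (by ring)
  have h14 := max0_pair (x := (d1+d4-d2-d3)/2) (y := (d2+d3-d1-d4)/2) (by ring)
  cases v <;>
    (rw [sum_g4]
     simp only [Fintype.sum_bool, g4_00, g4_01, g4_10, g4_11, nu, bne, Bool.false_eq_true,
       Bool.true_eq_false, eq_self_iff_true, and_true, true_and, and_false, false_and, and_self,
       if_true, if_false, ite_true, ite_false]
     norm_num [Wc, Wr]
     linarith)

lemma nu_half11 (d1 d2 d3 d4 : ℝ) (v : Bool) :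
    ∑ x : Fin 2 → Fin 2 → Bool, (if x 1 1 = v then nu d1 d2 d3 d4 x else 0) = 1/2 := by
  have h12 := max0_pair (x := (d1+d2-d3-d4)/2) (y := (d3+d4-d1-d2)/2) (by ring)
  have h13 := max0_pair (x := (d1+d3-d2-d4)/2) (y := (d2+d4-d1-d3)/2) (by ring)
  have h14 := max0_pair (x := (d1+d4-d2-d3)/2) (y := (d2+d3-d1-d4)/2) (by ring)
  cases v <;>
    (rw [sum_g4]
     simp only [Fintype.sum_bool, g4_00, g4_01, g4_10, g4_11, nu, bne, Bool.false_eq_true,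
       Bool.true_eq_false, eq_self_iff_true, and_true, true_and, and_false, false_and, and_self,
       if_true, if_false, ite_true, ite_false]
     norm_num [Wc, Wr]
     linarith)

lemma nu_edgeA (d1 d2 d3 d4 : ℝ) :
    ∑ x : Fin 2 → Fin 2 → Bool,
      (if x 0 0 = true ∧ x 0 1 = true then nu d1 d2 d3 d4 x else 0) = (1 - d1)/2 := by
  have h12 := max0_pair (x := (d1+d2-d3-d4)/2) (y := (d3+d4-d1-d2)/2) (by ring)
  have h13 := max0_pair (x := (d1+d3-d2-d4)/2) (y := (d2+d4-d1-d3)/2) (by ring)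
  have h14 := max0_pair (x := (d1+d4-d2-d3)/2) (y := (d2+d3-d1-d4)/2) (by ring)
  rw [sum_g4]
  simp only [Fintype.sum_bool, g4_00, g4_01, g4_10, g4_11, nu, bne, Bool.false_eq_true,
    Bool.true_eq_false, eq_self_iff_true, and_true, true_and, and_false, false_and, and_self,
    if_true, if_false, ite_true, ite_false]
  norm_num [Wc, Wr]
  linarith

lemma nu_edgeC (d1 d2 d3 d4 : ℝ) :
    ∑ x : Fin 2 → Fin 2 → Bool,
      (if x 1 0 = true ∧ x 1 1 = true then nu d1 d2 d3 d4 x else 0) = (1 - d3)/2 := by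
  have h12 := max0_pair (x := (d1+d2-d3-d4)/2) (y := (d3+d4-d1-d2)/2) (by ring)
  have h13 := max0_pair (x := (d1+d3-d2-d4)/2) (y := (d2+d4-d1-d3)/2) (by ring)
  have h14 := max0_pair (x := (d1+d4-d2-d3)/2) (y := (d2+d3-d1-d4)/2) (by ring)
  rw [sum_g4]
  simp only [Fintype.sum_bool, g4_00, g4_01, g4_10, g4_11, nu, bne, Bool.false_eq_true,
    Bool.true_eq_false, eq_self_iff_true, and_true, true_and, and_false, false_and, and_self,
    if_true, if_false, ite_true, ite_false]
  norm_num [Wc, Wr]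
  linarith

lemma nu_edgeB (d1 d2 d3 d4 : ℝ) (s0 s1 : Bool) :
    ∑ x : Fin 2 → Fin 2 → Bool,
      (if x 0 1 = s0 ∧ x 1 1 = s1 then nu d1 d2 d3 d4 x else 0)
      = cond (s0 == s1) ((1 - d2)/2) (d2/2) := by
  have h12 := max0_pair (x := (d1+d2-d3-d4)/2) (y := (d3+d4-d1-d2)/2) (by ring)
  have h13 := max0_pair (x := (d1+d3-d2-d4)/2) (y := (d2+d4-d1-d3)/2) (by ring)
  have h14 := max0_pair (x := (d1+d4-d2-d3)/2) (y := (d2+d3-d1-d4)/2) (by ring)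
  cases s0 <;> cases s1 <;>
    (rw [sum_g4]
     simp only [Fintype.sum_bool, g4_00, g4_01, g4_10, g4_11, nu, bne, Bool.false_eq_true,
       Bool.true_eq_false, eq_self_iff_true, and_true, true_and, and_false, false_and, and_self,
       if_true, if_false, ite_true, ite_false]
     norm_num [Wc, Wr]
     linarith)

lemma nu_edgeD (d1 d2 d3 d4 : ℝ) (s0 s1 : Bool) :
    ∑ x : Fin 2 → Fin 2 → Bool,
      (if x 0 0 = s0 ∧ x 1 0 = s1 then nu d1 d2 d3 d4 x else 0)
      = cond (s0 == s1) ((1 - d4)/2) (d4/2) := by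
  have h12 := max0_pair (x := (d1+d2-d3-d4)/2) (y := (d3+d4-d1-d2)/2) (by ring)
  have h13 := max0_pair (x := (d1+d3-d2-d4)/2) (y := (d2+d4-d1-d3)/2) (by ring)
  have h14 := max0_pair (x := (d1+d4-d2-d3)/2) (y := (d2+d3-d1-d4)/2) (by ring)
  cases s0 <;> cases s1 <;>
    (rw [sum_g4]
     simp only [Fintype.sum_bool, g4_00, g4_01, g4_10, g4_11, nu, bne, Bool.false_eq_true,
       Bool.true_eq_false, eq_self_iff_true, and_true, true_and, and_false, false_and, and_self,
       if_true, if_false, ite_true, ite_false]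
     norm_num [Wc, Wr]
     linarith)

lemma bool1 (u v : Bool) : ((u == v) == v) = u := by cases u <;> cases v <;> rfl
lemma bool2 (u v : Bool) : (u == (v == u)) = v := by cases u <;> cases v <;> rfl

def mk8 (x τ : Fin 2 → Fin 2 → Bool) : Fin 2 → Fin 2 → Fin 2 → Bool :=
  ![x, fun i j => τ i j == x i j]

@[simp] lemma mk8_zero (x τ : Fin 2 → Fin 2 → Bool) (i j : Fin 2) : mk8 x τ 0 i j = x i j := rfl
@[simp] lemma mk8_one (x τ : Fin 2 → Fin 2 → Bool) (i j : Fin 2) :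
    mk8 x τ 1 i j = (τ i j == x i j) := rfl

def e8 : ((Fin 2 → Fin 2 → Bool) × (Fin 2 → Fin 2 → Bool)) ≃ (Fin 2 → Fin 2 → Fin 2 → Bool) where
  toFun t := mk8 t.1 t.2
  invFun h := (fun i j => h 0 i j, fun i j => h 1 i j == h 0 i j)
  left_inv := by
    rintro ⟨x, τ⟩
    refine Prod.ext ?_ ?_ <;> funext i j
    · rfl
    · exact bool1 (τ i j) (x i j)
  right_inv := by
    intro h
    funext k i j
    fin_cases k
    · rfl
    · exact bool1 (h 1 i j) (h 0 i j)

lemma sum_mk8 (f : (Fin 2 → Fin 2 → Fin 2 → Bool) → ℝ) :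
    ∑ h, f h = ∑ x : Fin 2 → Fin 2 → Bool, ∑ τ : Fin 2 → Fin 2 → Bool, f (mk8 x τ) := by
  rw [← Equiv.sum_comp e8 f]
  rw [Fintype.sum_prod_type]
  rfl

def qb (b : Bool) (v : ℝ) : ℝ := cond b (2*v) (1-2*v)

lemma qb_nonneg {v : ℝ} (hv : v ∈ Set.Icc (0:ℝ) (1/2)) (b : Bool) : 0 ≤ qb b v := by
  obtain ⟨h0, h1⟩ := hv
  cases b <;> simp [qb] <;> linarith

noncomputable def mu (p ε : Fin 2 → Fin 2 → ℝ) (h : Fin 2 → Fin 2 → Fin 2 → Bool) : ℝ :=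
  qb (h 0 0 0 == h 1 0 0) (p 0 0) * qb (h 0 0 1 == h 1 0 1) (p 0 1) *
  qb (h 0 1 0 == h 1 1 0) (p 1 0) * qb (h 0 1 1 == h 1 1 1) (p 1 1) *
  nu (1 - 2 * ε 0 0)
     (cond ((h 0 0 1 == h 1 0 1) == (h 0 1 1 == h 1 1 1)) (1 - 2*ε 1 1) (2*ε 1 1))
     (1 - 2 * ε 0 1)
     (cond ((h 0 0 0 == h 1 0 0) == (h 0 1 0 == h 1 1 0)) (1 - 2*ε 1 0) (2*ε 1 0))
     (fun i j => h 0 i j)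

lemma mu_mk8 (p ε : Fin 2 → Fin 2 → ℝ) (x τ : Fin 2 → Fin 2 → Bool) :
    mu p ε (mk8 x τ) =
      qb (τ 0 0) (p 0 0) * qb (τ 0 1) (p 0 1) * qb (τ 1 0) (p 1 0) * qb (τ 1 1) (p 1 1) *
      nu (1 - 2 * ε 0 0)
         (cond ((τ 0 1) == (τ 1 1)) (1 - 2*ε 1 1) (2*ε 1 1))
         (1 - 2 * ε 0 1)
         (cond ((τ 0 0) == (τ 1 0)) (1 - 2*ε 1 0) (2*ε 1 0))
         x := by
  simp only [mu, mk8_zero, mk8_one, bool2]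

lemma sum_if_mul {α : Type*} [Fintype α] (P : α → Prop) [DecidablePred P] (C : ℝ) (f : α → ℝ) :
    ∑ x : α, (if P x then C * f x else 0) = C * ∑ x : α, (if P x then f x else 0) := by
  rw [Finset.mul_sum]
  refine Finset.sum_congr rfl fun x _ => ?_
  split <;> simp

set_option maxHeartbeats 2000000 in
lemma Dok_eps (ε : Fin 2 → Fin 2 → ℝ) (hε : ∀ k i, ε k i ∈ Set.Icc (0 : ℝ) (1 / 2))
    (habs : |ε 0 0 - 1/4| + |ε 0 1 - 1/4| + |ε 1 0 - 1/4| + |ε 1 1 - 1/4| ≤ 1/2)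
    (b2 b4 : Bool) :
    Dok (1 - 2 * ε 0 0) (cond b2 (1 - 2*ε 1 1) (2*ε 1 1)) (1 - 2 * ε 0 1)
      (cond b4 (1 - 2*ε 1 0) (2*ε 1 0)) := by
  obtain ⟨l00, u00⟩ := hε 0 0
  obtain ⟨l01, u01⟩ := hε 0 1
  obtain ⟨l10, u10⟩ := hε 1 0
  obtain ⟨l11, u11⟩ := hε 1 1
  have p00 := le_abs_self (ε 0 0 - 1/4); have n00 := neg_abs_le (ε 0 0 - 1/4)
  have p01 := le_abs_self (ε 0 1 - 1/4); have n01 := neg_abs_le (ε 0 1 - 1/4)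
  have p10 := le_abs_self (ε 1 0 - 1/4); have n10 := neg_abs_le (ε 1 0 - 1/4)
  have p11 := le_abs_self (ε 1 1 - 1/4); have n11 := neg_abs_le (ε 1 1 - 1/4)
  unfold Dok
  cases b2 <;> cases b4 <;>
    simp only [Bool.cond_true, Bool.cond_false] <;>
    refine ⟨?_,?_,?_,?_,?_,?_,?_,?_,?_,?_,?_,?_,?_,?_,?_,?_⟩ <;> linarith

lemma backward_dir (ε : Fin 2 → Fin 2 → ℝ) (hε : ∀ k i, ε k i ∈ Set.Icc (0 : ℝ) (1 / 2))
    (hmax : maxS ε ≤ 1 / 2) (p : Fin 2 → Fin 2 → ℝ)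
    (hp : ∀ i j, p i j ∈ Set.Icc (0 : ℝ) (1 / 2)) : ELFP p ε := by
  classical
  have hS : ∀ s, Sval ε s ≤ 1/2 := by
    intro s
    have := Finset.le_sup' (Sval ε) (Finset.mem_univ s)
    calc Sval ε s ≤ maxS ε := this
      _ ≤ 1/2 := hmax
  have habs : |ε 0 0 - 1/4| + |ε 0 1 - 1/4| + |ε 1 0 - 1/4| + |ε 1 1 - 1/4| ≤ 1/2 := by
    have h := hS (fun i j => decide ((1/4:ℝ) ≤ ε i j))
    simp only [Sval, Fin.sum_univ_two, decide_eq_true_eq] at h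
    have e : ∀ i j : Fin 2,
        (if (1/4:ℝ) ≤ ε i j then (1:ℝ) else -1) * (ε i j - 1/4) = |ε i j - 1/4| := by
      intro i j
      rcases le_or_gt (1/4 : ℝ) (ε i j) with hc | hc
      · rw [if_pos hc, one_mul, abs_of_nonneg (by linarith)]
      · rw [if_neg (not_le.mpr hc), abs_of_neg (by linarith)]; ring
    rw [e 0 0, e 0 1, e 1 0, e 1 1] at h
    linarith
  refine ⟨mu p ε, ?_, ?_, ?_, ?_, ?_, ?_⟩
  · -- nonnegativity
    intro h
    have hd := Dok_eps ε hε habs ((h 0 0 1 == h 1 0 1) == (h 0 1 1 == h 1 1 1))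
      ((h 0 0 0 == h 1 0 0) == (h 0 1 0 == h 1 1 0))
    unfold mu
    exact mul_nonneg (mul_nonneg (mul_nonneg (mul_nonneg (qb_nonneg (hp 0 0) _)
      (qb_nonneg (hp 0 1) _)) (qb_nonneg (hp 1 0) _)) (qb_nonneg (hp 1 1) _)) (nu_nonneg hd _)
  · -- total mass
    rw [sum_mk8 (mu p ε)]
    rw [Finset.sum_comm]
    have step : ∀ τ : Fin 2 → Fin 2 → Bool,
        ∑ x : Fin 2 → Fin 2 → Bool, mu p ε (mk8 x τ) =
          qb (τ 0 0) (p 0 0) * qb (τ 0 1) (p 0 1) * qb (τ 1 0) (p 1 0) * qb (τ 1 1) (p 1 1) := by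
      intro τ
      simp only [mu_mk8]
      rw [← Finset.mul_sum, nu_total, mul_one]
    rw [Finset.sum_congr rfl fun τ _ => step τ]
    rw [sum_g4]
    simp only [Fintype.sum_bool, g4_00, g4_01, g4_10, g4_11, qb, Bool.cond_true, Bool.cond_false]
    ring
  · -- marginals
    intro k i j
    rw [Finset.sum_filter, sum_mk8, Finset.sum_comm]
    fin_cases k
    · -- k = 0
      fin_cases i <;> fin_cases j
      · trans (∑ τ : Fin 2 → Fin 2 → Bool,
          qb (τ 0 0) (p 0 0) * qb (τ 0 1) (p 0 1) * qb (τ 1 0) (p 1 0) * qb (τ 1 1) (p 1 1) * (1/2))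
        · refine Finset.sum_congr rfl fun τ _ => ?_
          simp only [Fin.mk_zero, Fin.mk_one, mu_mk8, mk8_zero, mk8_one]
          rw [sum_if_mul, nu_half00]
        · rw [sum_g4]
          simp only [Fintype.sum_bool, g4_00, g4_01, g4_10, g4_11, qb, Bool.cond_true,
            Bool.cond_false]
          ring
      · trans (∑ τ : Fin 2 → Fin 2 → Bool,
          qb (τ 0 0) (p 0 0) * qb (τ 0 1) (p 0 1) * qb (τ 1 0) (p 1 0) * qb (τ 1 1) (p 1 1) * (1/2))
        · refine Finset.sum_congr rfl fun τ _ => ?_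
          simp only [Fin.mk_zero, Fin.mk_one, mu_mk8, mk8_zero, mk8_one]
          rw [sum_if_mul, nu_half01]
        · rw [sum_g4]
          simp only [Fintype.sum_bool, g4_00, g4_01, g4_10, g4_11, qb, Bool.cond_true,
            Bool.cond_false]
          ring
      · trans (∑ τ : Fin 2 → Fin 2 → Bool,
          qb (τ 0 0) (p 0 0) * qb (τ 0 1) (p 0 1) * qb (τ 1 0) (p 1 0) * qb (τ 1 1) (p 1 1) * (1/2))
        · refine Finset.sum_congr rfl fun τ _ => ?_
          simp only [Fin.mk_zero, Fin.mk_one, mu_mk8, mk8_zero, mk8_one]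
          rw [sum_if_mul, nu_half10]
        · rw [sum_g4]
          simp only [Fintype.sum_bool, g4_00, g4_01, g4_10, g4_11, qb, Bool.cond_true,
            Bool.cond_false]
          ring
      · trans (∑ τ : Fin 2 → Fin 2 → Bool,
          qb (τ 0 0) (p 0 0) * qb (τ 0 1) (p 0 1) * qb (τ 1 0) (p 1 0) * qb (τ 1 1) (p 1 1) * (1/2))
        · refine Finset.sum_congr rfl fun τ _ => ?_
          simp only [Fin.mk_zero, Fin.mk_one, mu_mk8, mk8_zero, mk8_one]
          rw [sum_if_mul, nu_half11]
        · rw [sum_g4]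
          simp only [Fintype.sum_bool, g4_00, g4_01, g4_10, g4_11, qb, Bool.cond_true,
            Bool.cond_false]
          ring
    · -- k = 1
      have hcond2 : ∀ u v : Bool, (((v == u) = true)) ↔ (u = v) := by decide
      fin_cases i <;> fin_cases j
      · trans (∑ τ : Fin 2 → Fin 2 → Bool,
          qb (τ 0 0) (p 0 0) * qb (τ 0 1) (p 0 1) * qb (τ 1 0) (p 1 0) * qb (τ 1 1) (p 1 1) * (1/2))
        · refine Finset.sum_congr rfl fun τ _ => ?_
          simp only [Fin.mk_zero, Fin.mk_one, mu_mk8, mk8_zero, mk8_one, hcond2]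
          rw [sum_if_mul, nu_half00]
        · rw [sum_g4]
          simp only [Fintype.sum_bool, g4_00, g4_01, g4_10, g4_11, qb, Bool.cond_true,
            Bool.cond_false]
          ring
      · trans (∑ τ : Fin 2 → Fin 2 → Bool,
          qb (τ 0 0) (p 0 0) * qb (τ 0 1) (p 0 1) * qb (τ 1 0) (p 1 0) * qb (τ 1 1) (p 1 1) * (1/2))
        · refine Finset.sum_congr rfl fun τ _ => ?_
          simp only [Fin.mk_zero, Fin.mk_one, mu_mk8, mk8_zero, mk8_one, hcond2]
          rw [sum_if_mul, nu_half01]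
        · rw [sum_g4]
          simp only [Fintype.sum_bool, g4_00, g4_01, g4_10, g4_11, qb, Bool.cond_true,
            Bool.cond_false]
          ring
      · trans (∑ τ : Fin 2 → Fin 2 → Bool,
          qb (τ 0 0) (p 0 0) * qb (τ 0 1) (p 0 1) * qb (τ 1 0) (p 1 0) * qb (τ 1 1) (p 1 1) * (1/2))
        · refine Finset.sum_congr rfl fun τ _ => ?_
          simp only [Fin.mk_zero, Fin.mk_one, mu_mk8, mk8_zero, mk8_one, hcond2]
          rw [sum_if_mul, nu_half10]
        · rw [sum_g4]
          simp only [Fintype.sum_bool, g4_00, g4_01, g4_10, g4_11, qb, Bool.cond_true,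
            Bool.cond_false]
          ring
      · trans (∑ τ : Fin 2 → Fin 2 → Bool,
          qb (τ 0 0) (p 0 0) * qb (τ 0 1) (p 0 1) * qb (τ 1 0) (p 1 0) * qb (τ 1 1) (p 1 1) * (1/2))
        · refine Finset.sum_congr rfl fun τ _ => ?_
          simp only [Fin.mk_zero, Fin.mk_one, mu_mk8, mk8_zero, mk8_one, hcond2]
          rw [sum_if_mul, nu_half11]
        · rw [sum_g4]
          simp only [Fintype.sum_bool, g4_00, g4_01, g4_10, g4_11, qb, Bool.cond_true,
            Bool.cond_false]
          ring
  · -- p constraint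
    intro i j
    rw [Finset.sum_filter, sum_mk8, Finset.sum_comm]
    have hcond : ∀ u v : Bool, (u = true ∧ (v == u) = true) ↔ (u = true ∧ v = true) := by decide
    fin_cases i <;> fin_cases j <;> simp only [Fin.mk_zero, Fin.mk_one] <;>
      [ (trans (∑ τ : Fin 2 → Fin 2 → Bool, if τ 0 0 = true then
          qb (τ 0 0) (p 0 0) * qb (τ 0 1) (p 0 1) * qb (τ 1 0) (p 1 0) * qb (τ 1 1) (p 1 1) * (1/2)
          else 0));
        (trans (∑ τ : Fin 2 → Fin 2 → Bool, if τ 0 1 = true then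
          qb (τ 0 0) (p 0 0) * qb (τ 0 1) (p 0 1) * qb (τ 1 0) (p 1 0) * qb (τ 1 1) (p 1 1) * (1/2)
          else 0));
        (trans (∑ τ : Fin 2 → Fin 2 → Bool, if τ 1 0 = true then
          qb (τ 0 0) (p 0 0) * qb (τ 0 1) (p 0 1) * qb (τ 1 0) (p 1 0) * qb (τ 1 1) (p 1 1) * (1/2)
          else 0));
        (trans (∑ τ : Fin 2 → Fin 2 → Bool, if τ 1 1 = true then
          qb (τ 0 0) (p 0 0) * qb (τ 0 1) (p 0 1) * qb (τ 1 0) (p 1 0) * qb (τ 1 1) (p 1 1) * (1/2)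
          else 0))] <;>
      [ (refine Finset.sum_congr rfl fun τ _ => ?_
         simp only [Fin.mk_zero, Fin.mk_one, mu_mk8, mk8_zero, mk8_one, hcond]
         cases hb : τ 0 0
         · simp only [hb, Bool.false_eq_true, and_false, if_false, Finset.sum_const_zero]
         · simp only [hb, and_true, if_true]
           rw [sum_if_mul, nu_half00]);
        (rw [sum_g4]
         simp only [Fintype.sum_bool, g4_00, g4_01, g4_10, g4_11, qb, Bool.cond_true,
           Bool.cond_false, Bool.false_eq_true, if_true, if_false, eq_self_iff_true]
         ring);
        (refine Finset.sum_congr rfl fun τ _ => ?_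
         simp only [Fin.mk_zero, Fin.mk_one, mu_mk8, mk8_zero, mk8_one, hcond]
         cases hb : τ 0 1
         · simp only [hb, Bool.false_eq_true, and_false, if_false, Finset.sum_const_zero]
         · simp only [hb, and_true, if_true]
           rw [sum_if_mul, nu_half01]);
        (rw [sum_g4]
         simp only [Fintype.sum_bool, g4_00, g4_01, g4_10, g4_11, qb, Bool.cond_true,
           Bool.cond_false, Bool.false_eq_true, if_true, if_false, eq_self_iff_true]
         ring);
        (refine Finset.sum_congr rfl fun τ _ => ?_
         simp only [Fin.mk_zero, Fin.mk_one, mu_mk8, mk8_zero, mk8_one, hcond]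
         cases hb : τ 1 0
         · simp only [hb, Bool.false_eq_true, and_false, if_false, Finset.sum_const_zero]
         · simp only [hb, and_true, if_true]
           rw [sum_if_mul, nu_half10]);
        (rw [sum_g4]
         simp only [Fintype.sum_bool, g4_00, g4_01, g4_10, g4_11, qb, Bool.cond_true,
           Bool.cond_false, Bool.false_eq_true, if_true, if_false, eq_self_iff_true]
         ring);
        (refine Finset.sum_congr rfl fun τ _ => ?_
         simp only [Fin.mk_zero, Fin.mk_one, mu_mk8, mk8_zero, mk8_one, hcond]
         cases hb : τ 1 1
         · simp only [hb, Bool.false_eq_true, and_false, if_false, Finset.sum_const_zero]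
         · simp only [hb, and_true, if_true]
           rw [sum_if_mul, nu_half11]);
        (rw [sum_g4]
         simp only [Fintype.sum_bool, g4_00, g4_01, g4_10, g4_11, qb, Bool.cond_true,
           Bool.cond_false, Bool.false_eq_true, if_true, if_false, eq_self_iff_true]
         ring)]
  · -- epsilon-1 constraint
    intro i
    rw [Finset.sum_filter, sum_mk8, Finset.sum_comm]
    fin_cases i
    · simp only [Fin.mk_zero, Fin.mk_one]
      trans (∑ τ : Fin 2 → Fin 2 → Bool,
        qb (τ 0 0) (p 0 0) * qb (τ 0 1) (p 0 1) * qb (τ 1 0) (p 1 0) * qb (τ 1 1) (p 1 1)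
          * ((1 - (1 - 2 * ε 0 0))/2))
      · refine Finset.sum_congr rfl fun τ _ => ?_
        simp only [Fin.mk_zero, Fin.mk_one, mu_mk8, mk8_zero, mk8_one]
        rw [sum_if_mul, nu_edgeA]
      · rw [sum_g4]
        simp only [Fintype.sum_bool, g4_00, g4_01, g4_10, g4_11, qb, Bool.cond_true,
          Bool.cond_false]
        ring
    · simp only [Fin.mk_zero, Fin.mk_one]
      trans (∑ τ : Fin 2 → Fin 2 → Bool,
        qb (τ 0 0) (p 0 0) * qb (τ 0 1) (p 0 1) * qb (τ 1 0) (p 1 0) * qb (τ 1 1) (p 1 1)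
          * ((1 - (1 - 2 * ε 0 1))/2))
      · refine Finset.sum_congr rfl fun τ _ => ?_
        simp only [Fin.mk_zero, Fin.mk_one, mu_mk8, mk8_zero, mk8_one]
        rw [sum_if_mul, nu_edgeC]
      · rw [sum_g4]
        simp only [Fintype.sum_bool, g4_00, g4_01, g4_10, g4_11, qb, Bool.cond_true,
          Bool.cond_false]
        ring
  · -- epsilon-2 constraint
    intro j
    rw [Finset.sum_filter, sum_mk8, Finset.sum_comm]
    have hcond2 : ∀ u v : Bool, (((v == u) = true)) ↔ (u = v) := by decide
    fin_cases j
    · simp only [Fin.mk_zero, Fin.mk_one]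
      trans (∑ τ : Fin 2 → Fin 2 → Bool,
        qb (τ 0 0) (p 0 0) * qb (τ 0 1) (p 0 1) * qb (τ 1 0) (p 1 0) * qb (τ 1 1) (p 1 1)
          * ε 1 0)
      · refine Finset.sum_congr rfl fun τ _ => ?_
        simp only [Fin.mk_zero, Fin.mk_one, mu_mk8, mk8_zero, mk8_one, hcond2]
        rw [sum_if_mul, nu_edgeD]
        cases hb : (τ 0 0 == τ 1 0) <;>
          simp only [Bool.cond_true, Bool.cond_false] <;> ring
      · rw [sum_g4]
        simp only [Fintype.sum_bool, g4_00, g4_01, g4_10, g4_11, qb, Bool.cond_true,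
          Bool.cond_false]
        ring
    · simp only [Fin.mk_zero, Fin.mk_one]
      trans (∑ τ : Fin 2 → Fin 2 → Bool,
        qb (τ 0 0) (p 0 0) * qb (τ 0 1) (p 0 1) * qb (τ 1 0) (p 1 0) * qb (τ 1 1) (p 1 1)
          * ε 1 1)
      · refine Finset.sum_congr rfl fun τ _ => ?_
        simp only [Fin.mk_zero, Fin.mk_one, mu_mk8, mk8_zero, mk8_one, hcond2]
        rw [sum_if_mul, nu_edgeB]
        cases hb : (τ 0 1 == τ 1 1) <;>
          simp only [Bool.cond_true, Bool.cond_false] <;> ring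
      · rw [sum_g4]
        simp only [Fintype.sum_bool, g4_00, g4_01, g4_10, g4_11, qb, Bool.cond_true,
          Bool.cond_false]
        ring

/-- the Fit set for the no-constraint ("chaos") condition:
`ε` is compatible with every `p ∈ [0,1/2]⁴` iff `max Sε ≤ 1/2`. -/
theorem fit_chaos
    (ε : Fin 2 → Fin 2 → ℝ)
    (hε : ∀ k i, ε k i ∈ Set.Icc (0 : ℝ) (1 / 2)) :
    (∀ p : Fin 2 → Fin 2 → ℝ, (∀ i j, p i j ∈ Set.Icc (0 : ℝ) (1 / 2)) → ELFP p ε) ↔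
      maxS ε ≤ 1 / 2 := by
  constructor
  · exact fun hall => forward_dir ε hall
  · exact fun hmax p hp => backward_dir ε hε hmax p hp
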